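/- arXiv:2106.06728 — 6 statements merged into one kernel-verified Lean document; each statement's English description precedes it below -/
import Mathlib

section
/- If a > 0, then the homogenized matrix A* is positive semidefinite, i.e. A*x·x ≥ 0 for every x ∈ ℝ^d. -/
open Matrix

lemma cs_psd {n : ℕ} (A : Matrix (Fin n) (Fin n) ℝ) (hA : A.PosSemidef) (u v : Fin n → ℝ) :
    (A.mulVec u ⬝ᵥ v)^2 ≤ (A.mulVec u ⬝ᵥ u) * (A.mulVec v ⬝ᵥ v) := by
  have hT : Aᵀ = A := by
    rw [← conjTranspose_eq_transpose_of_trivial, hA.1.eq]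
  have hsym : A.mulVec v ⬝ᵥ u = A.mulVec u ⬝ᵥ v := by
    rw [dotProduct_comm, dotProduct_mulVec, ← mulVec_transpose, hT]
  have key : ∀ t : ℝ, 0 ≤ (A.mulVec v ⬝ᵥ v) * (t * t) + (2 * (A.mulVec u ⬝ᵥ v)) * t + (A.mulVec u ⬝ᵥ u) := by
    intro t
    have h := hA.dotProduct_mulVec_nonneg (u + t • v)
    simp only [mulVec_add, mulVec_smul, add_dotProduct, dotProduct_add, smul_dotProduct,
      dotProduct_smul, smul_eq_mul, star_trivial, Pi.star_apply, star_add, star_smul] at h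
    rw [dotProduct_comm u (A *ᵥ u), dotProduct_comm v (A *ᵥ u), dotProduct_comm u (A *ᵥ v),
      dotProduct_comm v (A *ᵥ v), hsym] at h
    nlinarith [h]
  have h := discrim_le_zero key
  simp only [discrim] at h
  nlinarith [h]

lemma psd_quad_nn {n : ℕ} (A : Matrix (Fin n) (Fin n) ℝ) (hA : A.PosSemidef) (x : Fin n → ℝ) :
    0 ≤ A.mulVec x ⬝ᵥ x := by
  have h := hA.dotProduct_mulVec_nonneg x
  simpa [star_trivial, dotProduct_comm] using h

lemma vmv_quad {n : ℕ} (w v x : Fin n → ℝ) :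
    (vecMulVec w v).mulVec x ⬝ᵥ x = (w ⬝ᵥ x) * (v ⬝ᵥ x) := by
  simp only [vecMulVec, mulVec, dotProduct, of_apply, Finset.sum_mul, Finset.mul_sum]
  rw [Finset.sum_comm]
  congr 1; ext i; congr 1; ext j; ring

lemma aux_amgm (u v w α β : ℝ) (hu : 0 ≤ u) (hv : 0 ≤ v) (hw : w^2 ≤ u*v)
    (hα : 0 ≤ α) (hβ : 0 ≤ β) : 0 ≤ α^2*u + β^2*v + 2*α*β*w := by
  nlinarith [sq_nonneg (α^2*u - β^2*v),
    mul_nonneg (mul_nonneg (sq_nonneg α) (sq_nonneg β)) (sub_nonneg.2 hw),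
    add_nonneg (mul_nonneg (sq_nonneg α) hu) (mul_nonneg (sq_nonneg β) hv),
    mul_nonneg hu hv, sq_nonneg w]

/-- If `a > 0`, the homogenized matrix `A*` of a rank-one laminate with
symmetric positive semidefinite phases `A₁, A₂` is positive semidefinite. -/
theorem homogenized_matrix_nonneg
    (d : ℕ) (hd : 2 ≤ d) (θ : ℝ) (hθ : θ ∈ Set.Ioo (0 : ℝ) 1)
    (A₁ A₂ : Matrix (Fin d) (Fin d) ℝ)
    (hA₁ : A₁.PosSemidef) (hA₂ : A₂.PosSemidef)
    (e₁ : Fin d → ℝ) (he₁ : e₁ = Pi.single (⟨0, by omega⟩ : Fin d) 1)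
    (a : ℝ)
    (ha_def : a = (1 - θ) * (A₁.mulVec e₁ ⬝ᵥ e₁) + θ * (A₂.mulVec e₁ ⬝ᵥ e₁))
    (ha : 0 < a)
    (Astar : Matrix (Fin d) (Fin d) ℝ)
    (hAstar : Astar = θ • A₁ + (1 - θ) • A₂
      - (θ * (1 - θ) / a) • vecMulVec ((A₂ - A₁).mulVec e₁) ((A₂ - A₁).mulVec e₁)) :
    ∀ x : Fin d → ℝ, 0 ≤ Astar.mulVec x ⬝ᵥ x := by
  intro x
  obtain ⟨hθ0, hθ1⟩ := hθ
  set p1 := A₁.mulVec e₁ ⬝ᵥ e₁ with hp1d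
  set p2 := A₂.mulVec e₁ ⬝ᵥ e₁ with hp2d
  set q1 := A₁.mulVec x ⬝ᵥ x with hq1d
  set q2 := A₂.mulVec x ⬝ᵥ x with hq2d
  set c1 := A₁.mulVec e₁ ⬝ᵥ x with hc1d
  set c2 := A₂.mulVec e₁ ⬝ᵥ x with hc2d
  have hq : Astar.mulVec x ⬝ᵥ x
      = θ*q1 + (1-θ)*q2 - θ*(1-θ)/a * ((c2-c1)*(c2-c1)) := by
    rw [hAstar]
    rw [sub_mulVec, add_mulVec, smul_mulVec, smul_mulVec, smul_mulVec,
      sub_dotProduct, add_dotProduct, smul_dotProduct, smul_dotProduct, smul_dotProduct,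
      vmv_quad, sub_mulVec, sub_dotProduct]
    simp only [smul_eq_mul, hq1d, hq2d, hc1d, hc2d]
    try ring
  rw [hq, sub_nonneg, div_mul_eq_mul_div, div_le_iff₀ ha, ha_def]
  have hp1 : 0 ≤ p1 := psd_quad_nn A₁ hA₁ e₁
  have hp2 : 0 ≤ p2 := psd_quad_nn A₂ hA₂ e₁
  have hq1 : 0 ≤ q1 := psd_quad_nn A₁ hA₁ x
  have hq2 : 0 ≤ q2 := psd_quad_nn A₂ hA₂ x
  have h1 : c1^2 ≤ p1 * q1 := cs_psd A₁ hA₁ e₁ x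
  have h2 : c2^2 ≤ p2 * q2 := cs_psd A₂ hA₂ e₁ x
  have hw : (c1*c2)^2 ≤ (q1*p2)*(q2*p1) := by
    nlinarith [h1, h2, sq_nonneg c1, sq_nonneg c2, mul_nonneg hp2 hq2]
  have haux := aux_amgm (q1*p2) (q2*p1) (c1*c2) θ (1-θ)
    (mul_nonneg hq1 hp2) (mul_nonneg hq2 hp1) hw (le_of_lt hθ0) (by linarith)
  nlinarith [haux, mul_le_mul_of_nonneg_left h1 (le_of_lt (mul_pos hθ0 (by linarith : (0:ℝ) < 1-θ))),
    mul_le_mul_of_nonneg_left h2 (le_of_lt (mul_pos hθ0 (by linarith : (0:ℝ) < 1-θ)))]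
end

section
/- Let d = 2, let ξ ∈ ℝ² with ξ·e₁ ≠ 0, let A₁ := ξ ⊗ ξ, and let A₂ be symmetric positive definite. Then a > 0 and the homogenized matrix A* is positive definite, i.e. A*x·x > 0 for every nonzero x ∈ ℝ². -/
open Matrix

set_option maxHeartbeats 1000000

/-- In dimension two, with `A₁ = ξ ⊗ ξ` where `ξ·e₁ ≠ 0` and `A₂` symmetric positive
definite, one has `a > 0` and the homogenized matrix `A*` is positive definite. -/
theorem homogenized_matrix_posDef_dim2
    (θ : ℝ) (hθ : θ ∈ Set.Ioo (0 : ℝ) 1)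
    (ξ : Fin 2 → ℝ)
    (e₁ : Fin 2 → ℝ) (he₁ : e₁ = Pi.single 0 1)
    (hξ : ξ ⬝ᵥ e₁ ≠ 0)
    (A₁ A₂ : Matrix (Fin 2) (Fin 2) ℝ)
    (hA₁ : A₁ = vecMulVec ξ ξ) (hA₂ : A₂.PosDef)
    (a : ℝ)
    (ha_def : a = (1 - θ) * (A₁.mulVec e₁ ⬝ᵥ e₁) + θ * (A₂.mulVec e₁ ⬝ᵥ e₁))
    (Astar : Matrix (Fin 2) (Fin 2) ℝ)
    (hAstar : Astar = θ • A₁ + (1 - θ) • A₂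
      - (θ * (1 - θ) / a) • vecMulVec ((A₂ - A₁).mulVec e₁) ((A₂ - A₁).mulVec e₁)) :
    0 < a ∧ ∀ x : Fin 2 → ℝ, x ≠ 0 → 0 < Astar.mulVec x ⬝ᵥ x := by
  obtain ⟨hθ0, hθ1⟩ := hθ
  have hc0 : ξ 0 ≠ 0 := by
    simpa [he₁, dotProduct, Fin.sum_univ_two] using hξ
  set p := A₂ 0 0 with hp'
  set q := A₂ 0 1 with hq'
  set r := A₂ 1 1 with hr'
  have hsymm : A₂ 1 0 = q := by
    have := congrFun (congrFun hA₂.1 1) 0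
    simpa [Matrix.conjTranspose_apply] using this.symm
  have hp : 0 < p := by
    have := hA₂.dotProduct_mulVec_pos (x := Pi.single 0 1) (by intro h; simpa using congrFun h 0)
    simpa [Matrix.mulVec, dotProduct, Fin.sum_univ_two] using this
  have hdet : 0 < p * r - q ^ 2 := by
    have h2 := hA₂.dotProduct_mulVec_pos (x := ![q, -p]) (by
      intro h
      have := congrFun h 1
      simp at this
      exact hp.ne' this)
    have h2' : (star ![q, -p]) ⬝ᵥ (A₂ *ᵥ ![q, -p]) = p * (p * r - q ^ 2) := by
      simp [Matrix.mulVec, dotProduct, Fin.sum_univ_two, hsymm]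
      ring
    rw [h2'] at h2
    nlinarith
  have ha' : a = (1 - θ) * (ξ 0) ^ 2 + θ * p := by
    rw [ha_def, hA₁]
    simp [he₁, vecMulVec, Matrix.mulVec, dotProduct, Fin.sum_univ_two, sq]
    exact Or.inl rfl
  have ha : 0 < a := by
    rw [ha']
    have := sq_pos_of_ne_zero hc0
    nlinarith
  refine ⟨ha, fun x hx => ?_⟩
  have hx' : x 0 ≠ 0 ∨ x 1 ≠ 0 := by
    by_contra h
    push_neg at h
    exact hx (funext fun i => by fin_cases i <;> simp [h.1, h.2])
  set c0 := ξ 0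
  set c1 := ξ 1
  set x0 := x 0
  set x1 := x 1
  have hQ : p * a * (Astar *ᵥ x ⬝ᵥ x) =
      (θ * p * (c0 * x0 + c1 * x1) + (1 - θ) * c0 * (p * x0 + q * x1)) ^ 2
        + ((1 - θ) ^ 2 * c0 ^ 2 + θ * (1 - θ) * p) * (p * r - q ^ 2) * x1 ^ 2 := by
    rw [hAstar, hA₁, ha']
    simp [he₁, vecMulVec, Matrix.mulVec, dotProduct, Fin.sum_univ_two, hsymm,
      Matrix.sub_apply, Matrix.add_apply, Matrix.smul_apply]
    have hA : (1 - θ) * c0 ^ 2 + θ * p ≠ 0 := (ha' ▸ ha).ne'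
    field_simp
    ring
  have hRHS : 0 < (θ * p * (c0 * x0 + c1 * x1) + (1 - θ) * c0 * (p * x0 + q * x1)) ^ 2
        + ((1 - θ) ^ 2 * c0 ^ 2 + θ * (1 - θ) * p) * (p * r - q ^ 2) * x1 ^ 2 := by
    rcases eq_or_ne x1 0 with h1 | h1
    · rcases hx' with h0 | h0
      · have he : θ * p * (c0 * x0 + c1 * x1) + (1 - θ) * c0 * (p * x0 + q * x1)
            = p * c0 * x0 := by rw [h1]; ring
        rw [he, h1]
        have : p * c0 * x0 ≠ 0 := mul_ne_zero (mul_ne_zero hp.ne' hc0) h0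
        nlinarith [sq_pos_of_ne_zero this]
      · exact absurd h1 h0
    · have hcoef : 0 < (1 - θ) ^ 2 * c0 ^ 2 + θ * (1 - θ) * p := by
        have : 0 < θ * (1 - θ) * p := mul_pos (mul_pos hθ0 (by linarith)) hp
        nlinarith [sq_nonneg ((1 - θ) * c0)]
      nlinarith [sq_nonneg (θ * p * (c0 * x0 + c1 * x1) + (1 - θ) * c0 * (p * x0 + q * x1)),
        mul_pos (mul_pos hcoef hdet) (sq_pos_of_ne_zero h1)]
  nlinarith [mul_pos hp ha, hQ, hRHS]
end

section
/- Let d = 3 and suppose a > 0, the kernels of A₁ and A₂ satisfy ker(A₁) = span(η₁) and ker(A₂) = span(η₂) for vectors η₁, η₂ ∈ ℝ³ (so A₁ and A₂ have rank two), and the vectors {e₁, η₁, η₂} are linearly independent in ℝ³. Then the homogenized matrix A* is positive definite, i.e. A*x·x > 0 for every nonzero x ∈ ℝ³. -/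
open Matrix

private lemma symm_dot' {n : ℕ} {M : Matrix (Fin n) (Fin n) ℝ} (h : M.IsHermitian)
    (u v : Fin n → ℝ) : M *ᵥ u ⬝ᵥ v = M *ᵥ v ⬝ᵥ u := by
  rw [dotProduct_comm, dotProduct_mulVec, ← vecMul_transpose]
  have ht : Mᵀ = M := by
    have := h.eq
    simp [conjTranspose, Matrix.map] at this
    exact this
  rw [ht]

private lemma psd_nonneg' {n : ℕ} {M : Matrix (Fin n) (Fin n) ℝ} (h : M.PosSemidef)
    (v : Fin n → ℝ) : 0 ≤ M *ᵥ v ⬝ᵥ v := by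
  have := h.dotProduct_mulVec_nonneg v
  simpa [dotProduct_comm] using this

private lemma vecMulVec_mulVec' {n : ℕ} (u v x : Fin n → ℝ) :
    (vecMulVec u v) *ᵥ x = (v ⬝ᵥ x) • u := by
  ext i
  simp only [vecMulVec_apply, mulVec, dotProduct, Pi.smul_apply, smul_eq_mul,
    Finset.sum_mul, Finset.mul_sum]
  exact Finset.sum_congr rfl fun j _ => by ring

private lemma psd_zero_of_dot {n : ℕ} {M : Matrix (Fin n) (Fin n) ℝ} (h : M.PosSemidef)
    {v : Fin n → ℝ} (hv : M *ᵥ v ⬝ᵥ v = 0) : M *ᵥ v = 0 := by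
  apply (h.dotProduct_mulVec_zero_iff v).mp
  simpa [dotProduct_comm] using hv

/-- In dimension three, if `a > 0`, `ker A₁ = span{η₁}`, `ker A₂ = span{η₂}` and
`{e₁, η₁, η₂}` are linearly independent, then the homogenized matrix `A*` is
positive definite. -/
theorem homogenized_matrix_posDef_dim3
    (θ : ℝ) (hθ : θ ∈ Set.Ioo (0 : ℝ) 1)
    (A₁ A₂ : Matrix (Fin 3) (Fin 3) ℝ)
    (hA₁ : A₁.PosSemidef) (hA₂ : A₂.PosSemidef)
    (e₁ : Fin 3 → ℝ) (he₁ : e₁ = Pi.single 0 1)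
    (η₁ η₂ : Fin 3 → ℝ)
    (hker₁ : LinearMap.ker A₁.mulVecLin = Submodule.span ℝ {η₁})
    (hker₂ : LinearMap.ker A₂.mulVecLin = Submodule.span ℝ {η₂})
    (hind : LinearIndependent ℝ ![e₁, η₁, η₂])
    (a : ℝ)
    (ha_def : a = (1 - θ) * (A₁.mulVec e₁ ⬝ᵥ e₁) + θ * (A₂.mulVec e₁ ⬝ᵥ e₁))
    (ha : 0 < a)
    (Astar : Matrix (Fin 3) (Fin 3) ℝ)
    (hAstar : Astar = θ • A₁ + (1 - θ) • A₂
      - (θ * (1 - θ) / a) • vecMulVec ((A₂ - A₁).mulVec e₁) ((A₂ - A₁).mulVec e₁)) :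
    ∀ x : Fin 3 → ℝ, x ≠ 0 → 0 < Astar.mulVec x ⬝ᵥ x := by
  obtain ⟨hθ0, hθ1⟩ := hθ
  have hθ1' : 0 < 1 - θ := by linarith
  -- usable form of linear independence
  have hcomb : ∀ c₀ c₁ c₂ : ℝ, c₀ • e₁ + c₁ • η₁ + c₂ • η₂ = 0 →
      c₀ = 0 ∧ c₁ = 0 ∧ c₂ = 0 := by
    intro c₀ c₁ c₂ h
    have h' := Fintype.linearIndependent_iff.mp hind ![c₀, c₁, c₂] (by
      simpa [Fin.sum_univ_three, add_assoc] using h)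
    exact ⟨h' 0, h' 1, h' 2⟩
  obtain ⟨b₁, hb₁def⟩ : ∃ b, A₁ *ᵥ e₁ ⬝ᵥ e₁ = b := ⟨_, rfl⟩
  obtain ⟨b₂, hb₂def⟩ : ∃ b, A₂ *ᵥ e₁ ⬝ᵥ e₁ = b := ⟨_, rfl⟩
  rw [hb₁def, hb₂def] at ha_def
  -- positivity of b₁, b₂
  have hb₁ : 0 < b₁ := by
    rcases lt_or_eq_of_le (psd_nonneg' hA₁ e₁) with h | h
    · rwa [hb₁def] at h
    · exfalso
      rw [hb₁def] at h
      have hz : A₁ *ᵥ e₁ = 0 := psd_zero_of_dot hA₁ (by rw [hb₁def, ← h])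
      have hm : e₁ ∈ LinearMap.ker A₁.mulVecLin := by
        simp [LinearMap.mem_ker, Matrix.mulVecLin_apply, hz]
      rw [hker₁, Submodule.mem_span_singleton] at hm
      obtain ⟨c, hc⟩ := hm
      have := (hcomb 1 (-c) 0 (by rw [← hc]; module)).1
      norm_num at this
  have hb₂ : 0 < b₂ := by
    rcases lt_or_eq_of_le (psd_nonneg' hA₂ e₁) with h | h
    · rwa [hb₂def] at h
    · exfalso
      have hz : A₂ *ᵥ e₁ = 0 := psd_zero_of_dot hA₂ (by rw [← h])
      have hm : e₁ ∈ LinearMap.ker A₂.mulVecLin := by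
        simp [LinearMap.mem_ker, Matrix.mulVecLin_apply, hz]
      rw [hker₂, Submodule.mem_span_singleton] at hm
      obtain ⟨c, hc⟩ := hm
      have := (hcomb 1 0 (-c) (by rw [← hc]; module)).1
      norm_num at this
  intro x hx
  obtain ⟨p, hpdef⟩ : ∃ p, A₁ *ᵥ x ⬝ᵥ x = p := ⟨_, rfl⟩
  obtain ⟨q, hqdef⟩ : ∃ q, A₂ *ᵥ x ⬝ᵥ x = q := ⟨_, rfl⟩
  obtain ⟨s₁, hs₁def⟩ : ∃ s, A₁ *ᵥ e₁ ⬝ᵥ x = s := ⟨_, rfl⟩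
  obtain ⟨s₂, hs₂def⟩ : ∃ s, A₂ *ᵥ e₁ ⬝ᵥ x = s := ⟨_, rfl⟩
  have hsym₁ : A₁ *ᵥ x ⬝ᵥ e₁ = s₁ := by rw [symm_dot' hA₁.1 x e₁, hs₁def]
  have hsym₂ : A₂ *ᵥ x ⬝ᵥ e₁ = s₂ := by rw [symm_dot' hA₂.1 x e₁, hs₂def]
  -- the quadratic form of Astar at x
  have hQ : Astar *ᵥ x ⬝ᵥ x = θ * p + (1 - θ) * q - (θ * (1 - θ) / a) * (s₂ - s₁) ^ 2 := by
    rw [hAstar]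
    simp only [sub_mulVec, add_mulVec, smul_mulVec, vecMulVec_mulVec',
      sub_dotProduct, add_dotProduct, smul_dotProduct, smul_eq_mul, smul_smul]
    rw [hpdef, hqdef, hs₁def, hs₂def]
    ring
  rw [hQ]
  -- Cauchy–Schwarz remainders are nonnegative
  have hexp₁ : A₁ *ᵥ (b₁ • x - s₁ • e₁) ⬝ᵥ (b₁ • x - s₁ • e₁)
      = b₁ * (b₁ * p - s₁ ^ 2) := by
    simp only [mulVec_sub, mulVec_smul, sub_dotProduct, dotProduct_sub,
      smul_dotProduct, dotProduct_smul, smul_eq_mul]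
    rw [hsym₁, hpdef, hs₁def, hb₁def]
    ring
  have hexp₂ : A₂ *ᵥ (b₂ • x - s₂ • e₁) ⬝ᵥ (b₂ • x - s₂ • e₁)
      = b₂ * (b₂ * q - s₂ ^ 2) := by
    simp only [mulVec_sub, mulVec_smul, sub_dotProduct, dotProduct_sub,
      smul_dotProduct, dotProduct_smul, smul_eq_mul]
    rw [hsym₂, hqdef, hs₂def, hb₂def]
    ring
  have hr₁ : 0 ≤ b₁ * p - s₁ ^ 2 := by
    have h0 := psd_nonneg' hA₁ (b₁ • x - s₁ • e₁)
    rw [hexp₁] at h0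
    nlinarith
  have hr₂ : 0 ≤ b₂ * q - s₂ ^ 2 := by
    have h0 := psd_nonneg' hA₂ (b₂ • x - s₂ • e₁)
    rw [hexp₂] at h0
    nlinarith
  -- by contradiction
  by_contra hnot
  push_neg at hnot
  have hQle : a * (θ * p + (1 - θ) * q - (θ * (1 - θ) / a) * (s₂ - s₁) ^ 2) ≤ 0 :=
    mul_nonpos_iff.mpr (Or.inl ⟨ha.le, hnot⟩)
  have haQ : a * (θ * p + (1 - θ) * q - (θ * (1 - θ) / a) * (s₂ - s₁) ^ 2)
      = a * (θ * p + (1 - θ) * q) - θ * (1 - θ) * (s₂ - s₁) ^ 2 := by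
    field_simp
  have hid : b₁ * b₂ * (a * (θ * p + (1 - θ) * q) - θ * (1 - θ) * (s₂ - s₁) ^ 2) =
      θ * (1 - θ) * b₁ * b₂ * (b₁ * p - s₁ ^ 2)
      + θ * (1 - θ) * b₁ * b₂ * (b₂ * q - s₂ ^ 2)
      + θ ^ 2 * b₂ ^ 2 * (b₁ * p - s₁ ^ 2) + (1 - θ) ^ 2 * b₁ ^ 2 * (b₂ * q - s₂ ^ 2)
      + (θ * b₂ * s₁ + (1 - θ) * b₁ * s₂) ^ 2 := by
    rw [ha_def]; ring
  rw [haQ] at hQle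
  have hsum : θ * (1 - θ) * b₁ * b₂ * (b₁ * p - s₁ ^ 2)
      + θ * (1 - θ) * b₁ * b₂ * (b₂ * q - s₂ ^ 2)
      + θ ^ 2 * b₂ ^ 2 * (b₁ * p - s₁ ^ 2) + (1 - θ) ^ 2 * b₁ ^ 2 * (b₂ * q - s₂ ^ 2)
      + (θ * b₂ * s₁ + (1 - θ) * b₁ * s₂) ^ 2 ≤ 0 := by
    rw [← hid]
    exact mul_nonpos_iff.mpr (Or.inl ⟨by positivity, hQle⟩)
  have k₁ : (0:ℝ) < θ * (1 - θ) * b₁ * b₂ := by positivity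
  have k₂ : (0:ℝ) < θ ^ 2 * b₂ ^ 2 := by positivity
  have k₃ : (0:ℝ) < (1 - θ) ^ 2 * b₁ ^ 2 := by positivity
  have m₁ := mul_nonneg k₁.le hr₁
  have m₂ := mul_nonneg k₁.le hr₂
  have m₃ := mul_nonneg k₂.le hr₁
  have m₄ := mul_nonneg k₃.le hr₂
  have mE := sq_nonneg (θ * b₂ * s₁ + (1 - θ) * b₁ * s₂)
  have hR₁ : b₁ * p - s₁ ^ 2 = 0 := by
    refine le_antisymm ?_ hr₁
    by_contra h
    push_neg at h
    have := mul_pos k₁ h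
    linarith
  have hR₂ : b₂ * q - s₂ ^ 2 = 0 := by
    refine le_antisymm ?_ hr₂
    by_contra h
    push_neg at h
    have := mul_pos k₁ h
    linarith
  have hE : θ * b₂ * s₁ + (1 - θ) * b₁ * s₂ = 0 := by
    have h1 : (θ * b₂ * s₁ + (1 - θ) * b₁ * s₂) ^ 2 ≤ 0 := by linarith
    exact pow_eq_zero_iff (two_ne_zero) |>.mp (le_antisymm h1 mE)
  -- kernel memberships
  have hv₁ : ∃ t : ℝ, t • η₁ = b₁ • x - s₁ • e₁ := by
    have hz := psd_zero_of_dot hA₁ (by rw [hexp₁, hR₁, mul_zero])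
    have hm : (b₁ • x - s₁ • e₁) ∈ LinearMap.ker A₁.mulVecLin := by
      simp [LinearMap.mem_ker, Matrix.mulVecLin_apply, hz]
    rw [hker₁, Submodule.mem_span_singleton] at hm
    exact hm
  have hv₂ : ∃ t : ℝ, t • η₂ = b₂ • x - s₂ • e₁ := by
    have hz := psd_zero_of_dot hA₂ (by rw [hexp₂, hR₂, mul_zero])
    have hm : (b₂ • x - s₂ • e₁) ∈ LinearMap.ker A₂.mulVecLin := by
      simp [LinearMap.mem_ker, Matrix.mulVecLin_apply, hz]
    rw [hker₂, Submodule.mem_span_singleton] at hm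
    exact hm
  obtain ⟨t, ht⟩ := hv₁
  obtain ⟨u, hu⟩ := hv₂
  -- combine using linear independence
  have hlin : (b₂ * s₁ - b₁ * s₂) • e₁ + (b₂ * t) • η₁ + (-(b₁ * u)) • η₂ = 0 := by
    have key : (b₂ * s₁ - b₁ * s₂) • e₁ + (b₂ * t) • η₁ + (-(b₁ * u)) • η₂
        = b₂ • (t • η₁ - (b₁ • x - s₁ • e₁)) - b₁ • (u • η₂ - (b₂ • x - s₂ • e₁)) := by
      module
    rw [key, ht, hu, sub_self, sub_self, smul_zero, smul_zero, sub_zero]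
  obtain ⟨hc₀, hc₁, hc₂⟩ := hcomb _ _ _ hlin
  have ht0 : t = 0 := by
    rcases mul_eq_zero.mp hc₁ with h | h
    · exact absurd h hb₂.ne'
    · exact h
  have hu0 : u = 0 := by
    rw [neg_eq_zero] at hc₂
    rcases mul_eq_zero.mp hc₂ with h | h
    · exact absurd h hb₁.ne'
    · exact h
  -- conclude x = 0, contradiction
  have hs₁0 : s₁ = 0 := by
    have hbs : b₂ * s₁ = 0 := by linear_combination hE + (1 - θ) * hc₀
    rcases mul_eq_zero.mp hbs with h | h
    · exact absurd h hb₂.ne'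
    · exact h
  have hxe : b₁ • x = s₁ • e₁ := by
    rw [ht0, zero_smul] at ht
    have := ht.symm
    rwa [sub_eq_zero] at this
  rw [hs₁0, zero_smul] at hxe
  have : x = 0 := by
    rcases smul_eq_zero.mp hxe with h | h
    · exact absurd h hb₁.ne'
    · exact h
  exact hx this
end

section
/- Let θ ∈ (0,1), let η₁, η₂ ∈ ℝ³ be such that {e₁, η₁, η₂} are linearly independent in ℝ³, and let E := {(ξ₁, ξ₂) ∈ ℝ³ × ℝ³ : (ξ₁ − ξ₂)·e₁ = 0, ξ₁·η₁ = 0, ξ₂·η₂ = 0}. Then the linear map g : E → ℝ³ defined by g(ξ₁, ξ₂) := θξ₁ + (1−θ)ξ₂ is bijective; in particular, for every N ∈ ℝ³ there exists a unique pair (ξ₁, ξ₂) ∈ E with θξ₁ + (1−θ)ξ₂ = N. -/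
open Matrix

/-- If `{e₁, η₁, η₂}` are linearly independent in `ℝ³` and
`E = {(ξ₁,ξ₂) : (ξ₁−ξ₂)·e₁ = 0, ξ₁·η₁ = 0, ξ₂·η₂ = 0}`, then the map
`g(ξ₁,ξ₂) = θξ₁ + (1−θ)ξ₂` is a bijection from `E` onto `ℝ³`; in particular every
`N ∈ ℝ³` is attained by a unique pair `(ξ₁,ξ₂) ∈ E`. -/
theorem average_map_bijective_on_E
    (θ : ℝ) (hθ : θ ∈ Set.Ioo (0 : ℝ) 1)
    (e₁ : Fin 3 → ℝ) (he₁ : e₁ = Pi.single 0 1)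
    (η₁ η₂ : Fin 3 → ℝ)
    (hind : LinearIndependent ℝ ![e₁, η₁, η₂])
    (E : Set ((Fin 3 → ℝ) × (Fin 3 → ℝ)))
    (hE : E = {p : (Fin 3 → ℝ) × (Fin 3 → ℝ) |
      (p.1 - p.2) ⬝ᵥ e₁ = 0 ∧ p.1 ⬝ᵥ η₁ = 0 ∧ p.2 ⬝ᵥ η₂ = 0}) :
    Set.BijOn (fun p : (Fin 3 → ℝ) × (Fin 3 → ℝ) => θ • p.1 + (1 - θ) • p.2) E Set.univ
    ∧ ∀ N : Fin 3 → ℝ, ∃! p : (Fin 3 → ℝ) × (Fin 3 → ℝ),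
        p ∈ E ∧ θ • p.1 + (1 - θ) • p.2 = N := by
  obtain ⟨hθ0, hθ1⟩ := hθ
  have hθ0' : θ ≠ 0 := ne_of_gt hθ0
  have h1θ : (1 : ℝ) - θ ≠ 0 := by linarith
  set M : Matrix (Fin 3) (Fin 3) ℝ := Matrix.of ![e₁, η₁, η₂] with hM
  have hrows : (fun i => M i) = ![e₁, η₁, η₂] := rfl
  have hMunit : IsUnit M := by
    rw [← Matrix.linearIndependent_rows_iff_isUnit]
    exact hind
  have hinj : Function.Injective M.mulVec := Matrix.mulVec_injective_iff_isUnit.2 hMunit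
  have hsurj : Function.Surjective M.mulVec := Matrix.mulVec_surjective_iff_isUnit.2 hMunit
  -- key characterization
  have key : ∀ N : Fin 3 → ℝ, ∀ p : (Fin 3 → ℝ) × (Fin 3 → ℝ),
      (p ∈ E ∧ θ • p.1 + (1 - θ) • p.2 = N) →
      M.mulVec p.1 = ![N ⬝ᵥ e₁, 0, θ⁻¹ * (N ⬝ᵥ η₂)]
      ∧ p.2 = (1 - θ)⁻¹ • (N - θ • p.1) := by
    intro N p ⟨hpE, hpN⟩
    rw [hE] at hpE
    obtain ⟨h1, h2, h3⟩ := hpE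
    have hd1 : p.1 ⬝ᵥ e₁ = p.2 ⬝ᵥ e₁ := by
      have := h1; rw [sub_dotProduct] at this; linarith
    have hNe : N ⬝ᵥ e₁ = p.1 ⬝ᵥ e₁ := by
      rw [← hpN, add_dotProduct, smul_dotProduct, smul_dotProduct,
        smul_eq_mul, smul_eq_mul, hd1]; ring
    have hNη₂ : N ⬝ᵥ η₂ = θ * (p.1 ⬝ᵥ η₂) := by
      rw [← hpN, add_dotProduct, smul_dotProduct, smul_dotProduct,
        smul_eq_mul, smul_eq_mul, h3]; ring
    constructor
    · funext i
      fin_cases i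
      · simpa [M, Matrix.mulVec, dotProduct_comm] using hNe.symm
      · simpa [M, Matrix.mulVec, dotProduct_comm] using h2
      · have hp2 : p.1 ⬝ᵥ η₂ = θ⁻¹ * (N ⬝ᵥ η₂) := by
          rw [hNη₂]; field_simp
        simpa [M, Matrix.mulVec, dotProduct_comm] using hp2
    · have : (1 - θ) • p.2 = N - θ • p.1 := by
        rw [← hpN]; abel
      rw [← this, smul_smul, inv_mul_cancel₀ h1θ, one_smul]
  have huniq : ∀ N : Fin 3 → ℝ, ∃! p : (Fin 3 → ℝ) × (Fin 3 → ℝ),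
      p ∈ E ∧ θ • p.1 + (1 - θ) • p.2 = N := by
    intro N
    obtain ⟨x, hx⟩ := hsurj ![N ⬝ᵥ e₁, 0, θ⁻¹ * (N ⬝ᵥ η₂)]
    have hxe : x ⬝ᵥ e₁ = N ⬝ᵥ e₁ := by
      have := congrFun hx 0
      simpa [M, Matrix.mulVec, dotProduct_comm] using this
    have hxη₁ : x ⬝ᵥ η₁ = 0 := by
      have := congrFun hx 1
      simpa [M, Matrix.mulVec, dotProduct_comm] using this
    have hxη₂ : x ⬝ᵥ η₂ = θ⁻¹ * (N ⬝ᵥ η₂) := by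
      have := congrFun hx 2
      simpa [M, Matrix.mulVec, dotProduct_comm] using this
    refine ⟨(x, (1 - θ)⁻¹ • (N - θ • x)), ⟨?_, ?_⟩, ?_⟩
    · rw [hE]
      refine ⟨?_, hxη₁, ?_⟩
      · rw [sub_dotProduct, smul_dotProduct, sub_dotProduct,
          smul_dotProduct, smul_eq_mul, smul_eq_mul, hxe]
        field_simp
        ring
      · rw [smul_dotProduct, sub_dotProduct, smul_dotProduct,
          smul_eq_mul, smul_eq_mul, hxη₂]
        field_simp
        ring
    · show θ • x + (1 - θ) • ((1 - θ)⁻¹ • (N - θ • x)) = N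
      rw [smul_smul, mul_inv_cancel₀ h1θ, one_smul]; abel
    · intro q hq
      obtain ⟨hq1, hq2⟩ := key N q hq
      have hx1 : q.1 = x := hinj (by rw [hq1, hx])
      have : q = (q.1, q.2) := rfl
      rw [this, hx1, hq2, hx1]
  refine ⟨⟨fun p _ => trivial, ?_, ?_⟩, huniq⟩
  · intro p hp q hq hfeq
    obtain ⟨r, _, hr⟩ := huniq (θ • p.1 + (1 - θ) • p.2)
    have h1 := hr p ⟨hp, rfl⟩
    have h2 := hr q ⟨hq, hfeq.symm⟩
    rw [h1, h2]
  · intro N _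
    obtain ⟨p, ⟨hpE, hpN⟩, _⟩ := huniq N
    exact ⟨p, hpE, hpN⟩
end

section
/- Let a > 0 and let b : [0,1] → ℝ be continuous. Then the function u(x) := ∫₀¹ G(x,s) b(s) ds is twice continuously differentiable on [0,1], satisfies the Sturm–Liouville equation −a u''(x) + u(x) = b(x) for all x ∈ (0,1), and satisfies the Dirichlet boundary conditions u(0) = u(1) = 0. -/
open Real Set

/-- The Green representation `u(x) = ∫₀¹ G(x,s)b(s)ds` solves the Sturm–Liouville
problem `−a u'' + u = b` on `(0,1)` with Dirichlet boundary conditions, and `u` is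
twice continuously differentiable on `[0,1]`. -/
theorem green_representation_solves_SL
    (a : ℝ) (ha : 0 < a)
    (b : ℝ → ℝ) (hb : ContinuousOn b (Icc (0 : ℝ) 1))
    (G : ℝ → ℝ → ℝ)
    (hG : ∀ x s : ℝ, G x s =
      (1 / (Real.sqrt a * Real.sinh (1 / Real.sqrt a)))
        * Real.sinh (min x s / Real.sqrt a)
        * Real.sinh ((1 - max x s) / Real.sqrt a))
    (u : ℝ → ℝ) (hu : ∀ x : ℝ, u x = ∫ s in (0:ℝ)..1, G x s * b s) :
    ContDiffOn ℝ 2 u (Icc (0 : ℝ) 1)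
    ∧ (∀ x ∈ Ioo (0 : ℝ) 1, -a * deriv (deriv u) x + u x = b x)
    ∧ u 0 = 0 ∧ u 1 = 0 := by
  have hr : 0 < Real.sqrt a := Real.sqrt_pos.mpr ha
  set r := Real.sqrt a with hrdef
  have hrr : r * r = a := Real.mul_self_sqrt ha.le
  have hS : 0 < Real.sinh (1 / r) := Real.sinh_pos_iff.mpr (by positivity)
  set K : ℝ := 1 / (r * Real.sinh (1 / r)) with hKdef
  set bt : ℝ → ℝ := fun s => b (max 0 (min 1 s)) with hbtdef
  have hbtc : Continuous bt := by
    apply hb.comp_continuous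
    · exact continuous_const.max (continuous_const.min continuous_id)
    · intro x
      exact ⟨le_max_left _ _, max_le zero_le_one (min_le_left _ _)⟩
  have hbteq : ∀ s ∈ Icc (0:ℝ) 1, bt s = b s := by
    intro s hs
    simp only [hbtdef, min_eq_right hs.2, max_eq_right hs.1]
  set f : ℝ → ℝ := fun s => Real.sinh (s / r) * bt s with hfdef
  set g : ℝ → ℝ := fun s => Real.sinh ((1 - s) / r) * bt s with hgdef
  have hfc : Continuous f :=
    (Real.continuous_sinh.comp (continuous_id.div_const r)).mul hbtc
  have hgc : Continuous g :=
    (Real.continuous_sinh.comp ((continuous_const.sub continuous_id).div_const r)).mul hbtc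
  set A : ℝ → ℝ := fun x => ∫ s in (0:ℝ)..x, f s with hAdef
  set B : ℝ → ℝ := fun x => ∫ s in x..(1:ℝ), g s with hBdef
  have hA' : ∀ x : ℝ, HasDerivAt A (f x) x := fun x =>
    (hfc.integral_hasStrictDerivAt 0 x).hasDerivAt
  have hB' : ∀ x : ℝ, HasDerivAt B (-(g x)) x := by
    intro x
    have h := ((hgc.integral_hasStrictDerivAt 1 x).hasDerivAt).neg
    have hBeq : B = fun u => -∫ s in (1:ℝ)..u, g s := by
      funext u
      exact intervalIntegral.integral_symm 1 u
    rw [hBeq]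
    exact h
  -- derivatives of the hyperbolic factors
  have hs1 : ∀ x : ℝ, HasDerivAt (fun x : ℝ => Real.sinh ((1 - x) / r))
      (Real.cosh ((1 - x) / r) * (-1 / r)) x := by
    intro x
    have h : HasDerivAt (fun x : ℝ => (1 - x) / r) (-1 / r) x := by
      simpa using ((hasDerivAt_id x).const_sub 1).div_const r
    exact h.sinh
  have hs2 : ∀ x : ℝ, HasDerivAt (fun x : ℝ => Real.sinh (x / r))
      (Real.cosh (x / r) * (1 / r)) x := by
    intro x
    have h : HasDerivAt (fun x : ℝ => x / r) (1 / r) x := by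
      simpa using (hasDerivAt_id x).div_const r
    exact h.sinh
  have hc1 : ∀ x : ℝ, HasDerivAt (fun x : ℝ => Real.cosh ((1 - x) / r))
      (Real.sinh ((1 - x) / r) * (-1 / r)) x := by
    intro x
    have h : HasDerivAt (fun x : ℝ => (1 - x) / r) (-1 / r) x := by
      simpa using ((hasDerivAt_id x).const_sub 1).div_const r
    exact h.cosh
  have hc2 : ∀ x : ℝ, HasDerivAt (fun x : ℝ => Real.cosh (x / r))
      (Real.sinh (x / r) * (1 / r)) x := by
    intro x
    have h : HasDerivAt (fun x : ℝ => x / r) (1 / r) x := by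
      simpa using (hasDerivAt_id x).div_const r
    exact h.cosh
  set v : ℝ → ℝ := fun x =>
    K * (Real.sinh ((1 - x) / r) * A x + Real.sinh (x / r) * B x) with hvdef
  set w : ℝ → ℝ := fun x =>
    K * ((Real.cosh (x / r) * B x - Real.cosh ((1 - x) / r) * A x) / r) with hwdef
  have hKS : K * Real.sinh (1 / r) = 1 / r := by
    rw [hKdef]
    field_simp
  have hsum : ∀ x : ℝ, (1 - x) / r + x / r = 1 / r := by
    intro x
    rw [← add_div]
    ring_nf
  have hid : ∀ x : ℝ, Real.sinh ((1 - x) / r) * Real.cosh (x / r)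
      + Real.cosh ((1 - x) / r) * Real.sinh (x / r) = Real.sinh (1 / r) := by
    intro x
    rw [← hsum x, Real.sinh_add]
  have hv' : ∀ x : ℝ, HasDerivAt v (w x) x := by
    intro x
    have h := (((hs1 x).mul (hA' x)).add ((hs2 x).mul (hB' x))).const_mul K
    refine h.congr_deriv (Eq.symm ?_)
    simp only [hwdef, hfdef, hgdef]
    ring
  have hw' : ∀ x : ℝ, HasDerivAt w ((v x - bt x) / a) x := by
    intro x
    have h := ((((hc2 x).mul (hB' x)).sub ((hc1 x).mul (hA' x))).div_const r).const_mul K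
    refine h.congr_deriv (Eq.symm ?_)
    rw [← hrr]
    simp only [hvdef, hfdef, hgdef]
    have h1 := hid x
    linear_combination (bt x * K / r) * h1 + (bt x / r) * hKS
  have hvd : Differentiable ℝ v := fun x => (hv' x).differentiableAt
  have hdv : deriv v = w := funext fun x => (hv' x).deriv
  have hwd : Differentiable ℝ w := fun x => (hw' x).differentiableAt
  have hdw : deriv w = fun x => (v x - bt x) / a := funext fun x => (hw' x).deriv
  have hvc2 : ContDiff ℝ 2 v := by
    rw [show (2 : WithTop ℕ∞) = 1 + 1 from by norm_num, contDiff_succ_iff_deriv]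
    refine ⟨hvd, by simp, ?_⟩
    rw [hdv, contDiff_one_iff_deriv]
    refine ⟨hwd, ?_⟩
    rw [hdw]
    exact (hvd.continuous.sub hbtc).div_const a
  -- continuity of integrand
  have hGc : ∀ x : ℝ, ContinuousOn (fun s => G x s * b s) (Icc (0:ℝ) 1) := by
    intro x
    have hGx : Continuous (fun s => G x s) := by
      simp only [hG]
      exact (continuous_const.mul (Real.continuous_sinh.comp
        ((continuous_const.min continuous_id).div_const r))).mul
        (Real.continuous_sinh.comp
          ((continuous_const.sub (continuous_const.max continuous_id)).div_const r))
    exact hGx.continuousOn.mul hb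
  -- u equals v on [0,1]
  have huv : ∀ x ∈ Icc (0:ℝ) 1, u x = v x := by
    intro x hx
    rw [hu]
    have hi1 : IntervalIntegrable (fun s => G x s * b s) MeasureTheory.volume 0 x := by
      apply ContinuousOn.intervalIntegrable
      apply (hGc x).mono
      rw [uIcc_of_le hx.1]
      exact Icc_subset_Icc le_rfl hx.2
    have hi2 : IntervalIntegrable (fun s => G x s * b s) MeasureTheory.volume x 1 := by
      apply ContinuousOn.intervalIntegrable
      apply (hGc x).mono
      rw [uIcc_of_le hx.2]
      exact Icc_subset_Icc hx.1 le_rfl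
    rw [← intervalIntegral.integral_add_adjacent_intervals hi1 hi2]
    have e1 : (∫ s in (0:ℝ)..x, G x s * b s)
        = (K * Real.sinh ((1 - x) / r)) * A x := by
      rw [hAdef]
      simp only []
      rw [← intervalIntegral.integral_const_mul]
      apply intervalIntegral.integral_congr
      intro s hs
      rw [uIcc_of_le hx.1] at hs
      show G x s * b s = K * Real.sinh ((1 - x) / r) * f s
      rw [hG, min_eq_right hs.2, max_eq_left hs.2]
      simp only [hfdef]
      rw [hbteq s ⟨hs.1, hs.2.trans hx.2⟩]
      ring
    have e2 : (∫ s in x..(1:ℝ), G x s * b s)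
        = (K * Real.sinh (x / r)) * B x := by
      rw [hBdef]
      simp only []
      rw [← intervalIntegral.integral_const_mul]
      apply intervalIntegral.integral_congr
      intro s hs
      rw [uIcc_of_le hx.2] at hs
      show G x s * b s = K * Real.sinh (x / r) * g s
      rw [hG, min_eq_left hs.1, max_eq_right hs.1]
      simp only [hgdef]
      rw [hbteq s ⟨hx.1.trans hs.1, hs.2⟩]
      ring
    rw [e1, e2, hvdef]
    ring
  refine ⟨?_, ?_, ?_, ?_⟩
  · exact hvc2.contDiffOn.congr (fun x hx => huv x hx)
  · intro x hx
    have hmem : Icc (0:ℝ) 1 ∈ nhds x := Icc_mem_nhds hx.1 hx.2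
    have heq : u =ᶠ[nhds x] v := Filter.eventuallyEq_of_mem hmem huv
    have h2 : deriv (deriv u) x = deriv (deriv v) x := heq.deriv.deriv_eq
    have h3 : deriv (deriv v) x = (v x - bt x) / a := by
      rw [hdv]
      exact (hw' x).deriv
    rw [h2, h3, huv x (Ioo_subset_Icc_self hx), hbteq x (Ioo_subset_Icc_self hx)]
    field_simp
    ring
  · rw [hu]
    have hz : EqOn (fun s => G 0 s * b s) (fun _ => (0:ℝ)) (uIcc (0:ℝ) 1) := by
      intro s hs
      rw [uIcc_of_le zero_le_one] at hs
      simp only [hG, min_eq_left hs.1]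
      simp
    rw [intervalIntegral.integral_congr hz]
    simp
  · rw [hu]
    have hz : EqOn (fun s => G 1 s * b s) (fun _ => (0:ℝ)) (uIcc (0:ℝ) 1) := by
      intro s hs
      rw [uIcc_of_le zero_le_one] at hs
      simp only [hG, max_eq_left hs.2]
      simp
    rw [intervalIntegral.integral_congr hz]
    simp
end

section
/- Let d = 2, A₁ := e₂ ⊗ e₂ and A₂ := I₂, where e₂ is the second standard basis vector and I₂ the 2×2 identity matrix. Then a = θ > 0 and the homogenized matrix A* satisfies A*e₁·e₁ = 0; in particular A* is positive semidefinite but not positive definite. -/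
open Matrix

/-- Counter-example: for `A₁ = e₂ ⊗ e₂` and `A₂ = I₂`, one has `a = θ > 0`,
`A*e₁·e₁ = 0`, and `A*` is positive semidefinite but not positive definite. -/
theorem counterexample_not_posDef
    (θ : ℝ) (hθ : θ ∈ Set.Ioo (0 : ℝ) 1)
    (e₁ e₂ : Fin 2 → ℝ) (he₁ : e₁ = Pi.single 0 1) (he₂ : e₂ = Pi.single 1 1)
    (A₁ A₂ : Matrix (Fin 2) (Fin 2) ℝ)
    (hA₁ : A₁ = vecMulVec e₂ e₂) (hA₂ : A₂ = 1)
    (a : ℝ)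
    (ha_def : a = (1 - θ) * (A₁.mulVec e₁ ⬝ᵥ e₁) + θ * (A₂.mulVec e₁ ⬝ᵥ e₁))
    (Astar : Matrix (Fin 2) (Fin 2) ℝ)
    (hAstar : Astar = θ • A₁ + (1 - θ) • A₂
      - (θ * (1 - θ) / a) • vecMulVec ((A₂ - A₁).mulVec e₁) ((A₂ - A₁).mulVec e₁)) :
    a = θ ∧ 0 < a ∧ Astar.mulVec e₁ ⬝ᵥ e₁ = 0
    ∧ Astar.PosSemidef ∧ ¬ Astar.PosDef := by
  obtain ⟨hθ0, hθ1⟩ := hθ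
  have ha : a = θ := by
    subst he₁ he₂ hA₁ hA₂
    simp [ha_def, mulVec, dotProduct, vecMulVec, Fin.sum_univ_two, Pi.single_apply]
  have hA : Astar = !![0,0;0,1] := by
    subst he₁ he₂ hA₁ hA₂
    subst ha
    ext i j
    fin_cases i <;> fin_cases j <;>
      simp [hAstar, mulVec, dotProduct, vecMulVec, Fin.sum_univ_two, Pi.single_apply,
        Matrix.one_apply] <;>
      field_simp <;> ring
  have hq : ∀ x : Fin 2 → ℝ, x ⬝ᵥ Astar.mulVec x = (x 1)^2 := by
    intro x
    simp [hA, mulVec, dotProduct, Fin.sum_univ_two]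
    ring
  refine ⟨ha, ha ▸ hθ0, ?_, ?_, ?_⟩
  · have := hq e₁
    rw [dotProduct_comm] at this
    simpa [he₁] using this
  · refine .of_dotProduct_mulVec_nonneg ?_ ?_
    · rw [hA]; ext i j; fin_cases i <;> fin_cases j <;> rfl
    · intro x
      rw [show star x = x from star_trivial x, hq x]
      positivity
  · intro h
    have := h.dotProduct_mulVec_pos (x := e₁) (by simp [he₁])
    rw [show star e₁ = e₁ from star_trivial e₁, hq e₁] at this
    simp [he₁] at this
end
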